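/- Let d ≥ 2, ς ≥ 0, λ = (d+1)(ς + 1/2), M > 0, and set C_n = (λ)_n/(ς+1/2)_n, A_n = (λ)_n (λ−ς+1/2)_n/(n! (ς+1/2)_n), B_n = (−1)^n (λ)_n/n!. Then (i) lim_{n→∞} M C_n² / (1 + M(A_n − B_n)) = Γ(λ−ς+1/2) Γ(ς+1/2) / Γ(λ), and (ii) lim_{n→∞} n^{λ−2ς} · | M B_n / (1 + M A_n + d M B_n) | = Γ(λ−ς+1/2) / Γ(ς+1/2). -/

import Mathlib

open Filter Topology

noncomputable section

/-- The Pochhammer symbol `(a)_n = a (a+1) ⋯ (a+n-1)`. -/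
def pochh (a : ℝ) (n : ℕ) : ℝ := ∏ j ∈ Finset.range n, (a + j)

/-- `C_n = (λ)_n / (ς+1/2)_n`. -/
def Cseq (lam ς : ℝ) (n : ℕ) : ℝ := pochh lam n / pochh (ς + 1 / 2) n

/-- `A_n = (λ)_n (λ-ς+1/2)_n / (n! (ς+1/2)_n)`. -/
def Aseq (lam ς : ℝ) (n : ℕ) : ℝ :=
  pochh lam n * pochh (lam - ς + 1 / 2) n / ((n.factorial : ℝ) * pochh (ς + 1 / 2) n)

/-- `B_n = (-1)^n (λ)_n / n!`. -/
def Bseq (lam : ℝ) (n : ℕ) : ℝ := (-1) ^ n * pochh lam n / (n.factorial : ℝ)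

lemma div_div_div_eq' (a b c d : ℝ) : a / b / (c / d) = a * d / (b * c) := by
  simp only [div_eq_mul_inv, mul_inv, inv_inv]; ring

lemma pochh_pos {a : ℝ} (ha : 0 < a) (n : ℕ) : 0 < pochh a n :=
  Finset.prod_pos fun j _ => by positivity

lemma pochh_succ (a : ℝ) (n : ℕ) : pochh a (n + 1) = pochh a n * (a + n) :=
  Finset.prod_range_succ _ _

/-- Key asymptotic: `(a)_n / (n! n^(a-1)) → Γ(a)⁻¹`. -/
lemma pochh_asymp {a : ℝ} (ha : 0 < a) :
    Tendsto (fun n : ℕ => pochh a n / ((n.factorial : ℝ) * (n : ℝ) ^ (a - 1)))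
      atTop (𝓝 (Real.Gamma a)⁻¹) := by
  have hG := (Real.GammaSeq_tendsto_Gamma a).inv₀ (Real.Gamma_pos_of_pos ha).ne'
  have h1 : Tendsto (fun n : ℕ => ((n : ℝ) / (n + a)) * (Real.GammaSeq a n)⁻¹) atTop
      (𝓝 (1 * (Real.Gamma a)⁻¹)) := (tendsto_natCast_div_add_atTop a).mul hG
  rw [one_mul] at h1
  refine h1.congr' ?_
  filter_upwards [eventually_ge_atTop 1] with n hn
  have hn0 : (0:ℝ) < (n : ℝ) := by exact_mod_cast hn
  have hfac : (0:ℝ) < (n.factorial : ℝ) := by exact_mod_cast n.factorial_pos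
  have hpo : (0:ℝ) < pochh a n := pochh_pos ha n
  have hGS : Real.GammaSeq a n = (n : ℝ) ^ a * n.factorial / (pochh a n * (a + n)) := by
    rw [Real.GammaSeq, ← pochh_succ, pochh]
  rw [hGS]
  have han : (0:ℝ) < a + n := by positivity
  have hrp : (0:ℝ) < (n:ℝ) ^ a := Real.rpow_pos_of_pos hn0 a
  have hsub : (n : ℝ) ^ (a - 1) = (n : ℝ) ^ a / (n : ℝ) := by
    rw [Real.rpow_sub hn0, Real.rpow_one]
  rw [hsub]
  field_simp
  ring

/-- Let `d ≥ 2`, `ς ≥ 0`, `λ = (d+1)(ς+1/2)`, `M > 0`. Then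
(i) `lim_n M C_n² / (1 + M(A_n − B_n)) = Γ(λ−ς+1/2) Γ(ς+1/2) / Γ(λ)`, and
(ii) `lim_n n^{λ−2ς} · |M B_n / (1 + M A_n + d M B_n)| = Γ(λ−ς+1/2) / Γ(ς+1/2)`. -/
theorem mass_coefficient_asymptotics
    (d : ℕ) (hd : 2 ≤ d) (ς : ℝ) (hς : 0 ≤ ς) (M : ℝ) (hM : 0 < M)
    (lam : ℝ) (hlam : lam = (d + 1) * (ς + 1 / 2)) :
    Tendsto (fun n : ℕ =>
        M * (Cseq lam ς n) ^ 2 / (1 + M * (Aseq lam ς n - Bseq lam n)))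
      atTop
      (𝓝 (Real.Gamma (lam - ς + 1 / 2) * Real.Gamma (ς + 1 / 2) /
        Real.Gamma lam)) ∧
    Tendsto (fun n : ℕ =>
        (n : ℝ) ^ (lam - 2 * ς) *
          |M * Bseq lam n / (1 + M * Aseq lam ς n + d * M * Bseq lam n)|)
      atTop
      (𝓝 (Real.Gamma (lam - ς + 1 / 2) / Real.Gamma (ς + 1 / 2))) := by
  have ha2 : (0:ℝ) < ς + 1/2 := by linarith
  have hd' : (2:ℝ) ≤ (d:ℝ) := by exact_mod_cast hd
  have hlampos : 0 < lam := by nlinarith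
  have hmpos : 0 < lam - ς + 1/2 := by nlinarith
  set c : ℝ := lam - (ς + 1/2) with hc_def
  have hc : 0 < c := by simp only [hc_def]; nlinarith
  have hneg : lam - 1 - 2*c < 0 := by simp only [hc_def]; nlinarith
  have hGl := Real.Gamma_pos_of_pos hlampos
  have hGa := Real.Gamma_pos_of_pos ha2
  have hGm := Real.Gamma_pos_of_pos hmpos
  have hpl := pochh_asymp hlampos
  have hpa := pochh_asymp ha2
  have hpm := pochh_asymp hmpos
  -- n^{-2c} → 0
  have h0 : Tendsto (fun n : ℕ => (n:ℝ)^(-(2*c))) atTop (𝓝 0) :=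
    (tendsto_rpow_neg_atTop (by linarith)).comp tendsto_natCast_atTop_atTop
  -- C_n n^{-c} → Γλ⁻¹/Γα⁻¹
  have hC : Tendsto (fun n : ℕ => Cseq lam ς n * (n:ℝ)^(-c)) atTop
      (𝓝 ((Real.Gamma lam)⁻¹ / (Real.Gamma (ς + 1/2))⁻¹)) := by
    refine (hpl.div hpa (by positivity)).congr' ?_
    filter_upwards [eventually_ge_atTop 1] with n hn
    have hn0 : (0:ℝ) < (n : ℝ) := by exact_mod_cast hn
    have hfac : (0:ℝ) < (n.factorial : ℝ) := by exact_mod_cast n.factorial_pos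
    have hpoa : (0:ℝ) < pochh (ς + 1/2) n := pochh_pos ha2 n
    have hsplit : (n:ℝ)^(lam - 1) = (n:ℝ)^c * (n:ℝ)^(ς + 1/2 - 1) := by
      rw [← Real.rpow_add hn0]; congr 1; simp only [hc_def]; ring
    have h1 : (0:ℝ) < (n:ℝ)^c := Real.rpow_pos_of_pos hn0 _
    have h2 : (0:ℝ) < (n:ℝ)^(ς + 1/2 - 1) := Real.rpow_pos_of_pos hn0 _
    have f1 : ((n.factorial:ℝ)) ≠ 0 := hfac.ne'
    have f2 : pochh (ς + 1/2) n ≠ 0 := hpoa.ne'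
    have f3 : (n:ℝ) ^ c ≠ 0 := h1.ne'
    have f4 : (n:ℝ) ^ (ς + 1/2 - 1) ≠ 0 := h2.ne'
    simp only [Pi.div_apply]
    rw [div_div_div_eq', Cseq, Real.rpow_neg hn0.le, ← div_eq_mul_inv, div_div]
    rw [div_eq_div_iff (by positivity) (by positivity)]
    linear_combination (-(pochh lam n * (n.factorial:ℝ) * pochh (ς + 1/2) n)) * hsplit
  -- A_n n^{-2c} → Γλ⁻¹ Γμ⁻¹ / Γα⁻¹
  have hA : Tendsto (fun n : ℕ => Aseq lam ς n * (n:ℝ)^(-(2*c))) atTop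
      (𝓝 ((Real.Gamma lam)⁻¹ * (Real.Gamma (lam - ς + 1/2))⁻¹ / (Real.Gamma (ς + 1/2))⁻¹)) := by
    refine ((hpl.mul hpm).div hpa (by positivity)).congr' ?_
    filter_upwards [eventually_ge_atTop 1] with n hn
    have hn0 : (0:ℝ) < (n : ℝ) := by exact_mod_cast hn
    have hfac : (0:ℝ) < (n.factorial : ℝ) := by exact_mod_cast n.factorial_pos
    have hpoa : (0:ℝ) < pochh (ς + 1/2) n := pochh_pos ha2 n
    have h1 : (0:ℝ) < (n:ℝ)^(lam - 1) := Real.rpow_pos_of_pos hn0 _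
    have h2 : (0:ℝ) < (n:ℝ)^(ς + 1/2 - 1) := Real.rpow_pos_of_pos hn0 _
    have h3 : (0:ℝ) < (n:ℝ)^(lam - ς + 1/2 - 1) := Real.rpow_pos_of_pos hn0 _
    have h4 : (0:ℝ) < (n:ℝ)^(2*c) := Real.rpow_pos_of_pos hn0 _
    have hsplit : (n:ℝ)^(lam - 1) * (n:ℝ)^(lam - ς + 1/2 - 1)
        = (n:ℝ)^(2*c) * (n:ℝ)^(ς + 1/2 - 1) := by
      rw [← Real.rpow_add hn0, ← Real.rpow_add hn0]; congr 1; simp only [hc_def]; ring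
    have f1 : ((n.factorial:ℝ)) ≠ 0 := hfac.ne'
    have f2 : pochh (ς + 1/2) n ≠ 0 := hpoa.ne'
    have f3 : (n:ℝ) ^ (2*c) ≠ 0 := h4.ne'
    have f4 : (n:ℝ) ^ (ς + 1/2 - 1) ≠ 0 := h2.ne'
    have f5 : (n:ℝ) ^ (lam - 1) ≠ 0 := h1.ne'
    have f6 : (n:ℝ) ^ (lam - ς + 1/2 - 1) ≠ 0 := h3.ne'
    simp only [Pi.div_apply, Pi.mul_apply]
    rw [div_mul_div_comm, div_div_div_eq', Aseq, Real.rpow_neg hn0.le,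
      ← div_eq_mul_inv, div_div]
    rw [div_eq_div_iff (by positivity) (by positivity)]
    linear_combination (-(pochh lam n * pochh (lam - ς + 1/2) n * (n.factorial:ℝ) *
      (n.factorial:ℝ) * pochh (ς + 1/2) n)) * hsplit
  -- |B_n| = pochh lam n / n!
  have habsB : ∀ n : ℕ, |Bseq lam n| = pochh lam n / (n.factorial : ℝ) := by
    intro n
    rw [Bseq, abs_div, abs_mul, abs_pow, abs_neg, abs_one, one_pow, one_mul,
      abs_of_pos (pochh_pos hlampos n), Nat.abs_cast]
  -- n^(lam-1-2c) → 0
  have hrneg : Tendsto (fun n : ℕ => (n:ℝ) ^ (lam - 1 - 2*c)) atTop (𝓝 0) := by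
    have h := (tendsto_rpow_neg_atTop (y := 2*c + 1 - lam) (by linarith)).comp
      tendsto_natCast_atTop_atTop
    refine h.congr fun n => ?_
    simp only [Function.comp_apply]
    congr 1
    ring
  -- B_n n^{-2c} → 0
  have hB0 : Tendsto (fun n : ℕ => Bseq lam n * (n:ℝ)^(-(2*c))) atTop (𝓝 0) := by
    rw [tendsto_zero_iff_abs_tendsto_zero]
    have h := hpl.mul hrneg
    rw [mul_zero] at h
    refine h.congr' ?_
    filter_upwards [eventually_ge_atTop 1] with n hn
    have hn0 : (0:ℝ) < (n : ℝ) := by exact_mod_cast hn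
    have hfac : (0:ℝ) < (n.factorial : ℝ) := by exact_mod_cast n.factorial_pos
    have hsplit : (n:ℝ)^(lam - 1 - 2*c) = (n:ℝ)^(lam-1) * (n:ℝ)^(-(2*c)) := by
      rw [← Real.rpow_add hn0]; congr 1
    show pochh lam n / ((n.factorial:ℝ) * (n:ℝ)^(lam-1)) * (n:ℝ)^(lam - 1 - 2*c) = |Bseq lam n * (n:ℝ)^(-(2*c))|
    rw [abs_mul, habsB, abs_of_pos (Real.rpow_pos_of_pos hn0 _), hsplit]
    field_simp
  -- limit constants
  set Gl := Real.Gamma lam with hGl_def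
  set Ga := Real.Gamma (ς + 1/2) with hGa_def
  set Gm := Real.Gamma (lam - ς + 1/2) with hGm_def
  have hcApos : (0:ℝ) < Gl⁻¹ * Gm⁻¹ / Ga⁻¹ := by positivity
  have hMcA : M * (Gl⁻¹ * Gm⁻¹ / Ga⁻¹) ≠ 0 := by positivity
  -- Part (i)
  have part1 : Tendsto (fun n : ℕ =>
      M * (Cseq lam ς n) ^ 2 / (1 + M * (Aseq lam ς n - Bseq lam n))) atTop
      (𝓝 (Gm * Ga / Gl)) := by
    have hnum : Tendsto (fun n : ℕ => M * (Cseq lam ς n)^2 * (n:ℝ)^(-(2*c))) atTop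
        (𝓝 (M * (Gl⁻¹/Ga⁻¹ * (Gl⁻¹/Ga⁻¹)))) := by
      refine ((hC.mul hC).const_mul M).congr' ?_
      filter_upwards [eventually_ge_atTop 1] with n hn
      have hn0 : (0:ℝ) < (n : ℝ) := by exact_mod_cast hn
      have hsplit : (n:ℝ)^(-(2*c)) = (n:ℝ)^(-c) * (n:ℝ)^(-c) := by
        rw [← Real.rpow_add hn0]; congr 1; ring
      rw [hsplit]; ring
    have hden : Tendsto (fun n : ℕ =>
        (1 + M * (Aseq lam ς n - Bseq lam n)) * (n:ℝ)^(-(2*c))) atTop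
        (𝓝 (M * (Gl⁻¹ * Gm⁻¹ / Ga⁻¹))) := by
      have h := h0.add ((hA.sub hB0).const_mul M)
      have he : (0:ℝ) + M * (Gl⁻¹ * Gm⁻¹ / Ga⁻¹ - 0) = M * (Gl⁻¹ * Gm⁻¹ / Ga⁻¹) := by ring
      rw [he] at h
      refine h.congr fun n => by ring
    have h := hnum.div hden hMcA
    have hval : M * (Gl⁻¹/Ga⁻¹ * (Gl⁻¹/Ga⁻¹)) / (M * (Gl⁻¹ * Gm⁻¹ / Ga⁻¹))
        = Gm * Ga / Gl := by
      have g1 : Gl ≠ 0 := hGl.ne'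
      have g2 : Ga ≠ 0 := hGa.ne'
      have g3 : Gm ≠ 0 := hGm.ne'
      field_simp
    rw [hval] at h
    refine h.congr' ?_
    filter_upwards [eventually_ge_atTop 1] with n hn
    have hn0 : (0:ℝ) < (n : ℝ) := by exact_mod_cast hn
    have hx : (n:ℝ)^(-(2*c)) ≠ 0 := (Real.rpow_pos_of_pos hn0 _).ne'
    simp only [Pi.div_apply]
    rw [mul_comm (M * (Cseq lam ς n)^2), mul_comm (1 + M * (Aseq lam ς n - Bseq lam n)),
      mul_div_mul_left _ _ hx]
  -- Part (ii)
  have part2 : Tendsto (fun n : ℕ =>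
      (n : ℝ) ^ (lam - 2 * ς) *
        |M * Bseq lam n / (1 + M * Aseq lam ς n + d * M * Bseq lam n)|) atTop
      (𝓝 (Gm / Ga)) := by
    have hden : Tendsto (fun n : ℕ =>
        (1 + M * Aseq lam ς n + d * M * Bseq lam n) * (n:ℝ)^(-(2*c))) atTop
        (𝓝 (M * (Gl⁻¹ * Gm⁻¹ / Ga⁻¹))) := by
      have h := (h0.add (hA.const_mul M)).add (hB0.const_mul ((d:ℝ) * M))
      have he : (0:ℝ) + M * (Gl⁻¹ * Gm⁻¹ / Ga⁻¹) + (d:ℝ) * M * 0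
          = M * (Gl⁻¹ * Gm⁻¹ / Ga⁻¹) := by ring
      rw [he] at h
      refine h.congr fun n => by ring
    have hdenabs : Tendsto (fun n : ℕ =>
        |(1 + M * Aseq lam ς n + d * M * Bseq lam n) * (n:ℝ)^(-(2*c))|) atTop
        (𝓝 (M * (Gl⁻¹ * Gm⁻¹ / Ga⁻¹))) := by
      have h := hden.abs
      rwa [abs_of_pos (by positivity)] at h
    have hnum : Tendsto (fun n : ℕ =>
        M * (pochh lam n / ((n.factorial:ℝ) * (n:ℝ)^(lam-1)))) atTop (𝓝 (M * Gl⁻¹)) :=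
      hpl.const_mul M
    have h := hnum.div hdenabs hMcA
    have hval : M * Gl⁻¹ / (M * (Gl⁻¹ * Gm⁻¹ / Ga⁻¹)) = Gm / Ga := by
      have g1 : Gl ≠ 0 := hGl.ne'
      have g2 : Ga ≠ 0 := hGa.ne'
      have g3 : Gm ≠ 0 := hGm.ne'
      field_simp
    rw [hval] at h
    refine h.congr' ?_
    filter_upwards [eventually_ge_atTop 1] with n hn
    have hn0 : (0:ℝ) < (n : ℝ) := by exact_mod_cast hn
    simp only [Pi.div_apply]
    have hfac : (0:ℝ) < (n.factorial : ℝ) := by exact_mod_cast n.factorial_pos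
    have hkey : (n:ℝ)^(lam - 2*ς) = ((n:ℝ)^(lam-1) * (n:ℝ)^(-(2*c)))⁻¹ := by
      rw [← Real.rpow_add hn0, ← Real.rpow_neg hn0.le]
      congr 1
      simp only [hc_def]; ring
    rw [abs_mul (1 + M * Aseq lam ς n + d * M * Bseq lam n),
      abs_of_pos (Real.rpow_pos_of_pos hn0 (-(2*c))), abs_div, abs_mul, habsB,
      abs_of_pos hM, hkey]
    simp only [div_eq_mul_inv, mul_inv, inv_inv]
    ring
  exact ⟨part1, part2⟩
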